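/- (Lower Hermite–Hadamard for (ω₀,ω₁)-convex functions.) Let (ω₀,ω₁) be a positive Chebyshev system on an open interval I and ρ : I → ℝ a positive integrable function. For x < y in I define ξ(x,y) := (ω₁/ω₀)⁻¹( (∫ₓʸ ω₁ρ)/(∫ₓʸ ω₀ρ) ) and c(x,y) := (∫ₓʸ ω₀ρ)/ω₀(ξ(x,y)). If f : I → ℝ is (ω₀,ω₁)-convex, then for all x < y in I, c(x,y)·f(ξ(x,y)) ≤ ∫ₓʸ fρ. -/

import Mathlib

open MeasureTheory intervalIntegral

/-- lower Hermite–Hadamard for `(ω₀,ω₁)`-convex functions: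
`c(x,y)·f(ξ(x,y)) ≤ ∫ₓʸ fρ`, where `ξ(x,y) = (ω₁/ω₀)⁻¹((∫ₓʸω₁ρ)/(∫ₓʸω₀ρ))`
and `c(x,y) = (∫ₓʸω₀ρ)/ω₀(ξ(x,y))`. -/
theorem lower_hermite_hadamard_chebyshev
    (a b : ℝ) (hab : a < b)
    (ω₀ ω₁ : ℝ → ℝ)
    (hc₀ : ContinuousOn ω₀ (Set.Ioo a b)) (hc₁ : ContinuousOn ω₁ (Set.Ioo a b))
    (hω₀pos : ∀ z ∈ Set.Ioo a b, 0 < ω₀ z)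
    (hcheb : ∀ u ∈ Set.Ioo a b, ∀ v ∈ Set.Ioo a b, u < v →
        0 < ω₀ u * ω₁ v - ω₀ v * ω₁ u)
    (ρ : ℝ → ℝ) (hρpos : ∀ z ∈ Set.Ioo a b, 0 < ρ z)
    (hρint : ∀ x ∈ Set.Ioo a b, ∀ y ∈ Set.Ioo a b, IntervalIntegrable ρ volume x y)
    -- ξ(x,y) is the (ω₁/ω₀)-inverse of the weighted ratio of moments
    (ξ : ℝ → ℝ → ℝ)
    (hξ : ∀ x ∈ Set.Ioo a b, ∀ y ∈ Set.Ioo a b, x < y →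
        ξ x y ∈ Set.Ioo x y ∧
        ω₁ (ξ x y) / ω₀ (ξ x y) =
          (∫ u in x..y, ω₁ u * ρ u) / (∫ u in x..y, ω₀ u * ρ u))
    (f : ℝ → ℝ)
    (hfρint : ∀ x ∈ Set.Ioo a b, ∀ y ∈ Set.Ioo a b,
        IntervalIntegrable (fun u => f u * ρ u) volume x y)
    -- f is (ω₀,ω₁)-convex
    (hconv : ∀ x ∈ Set.Ioo a b, ∀ u ∈ Set.Ioo a b, ∀ y ∈ Set.Ioo a b,
        x < u → u < y →
        f u ≤ (ω₀ u * ω₁ y - ω₀ y * ω₁ u) / (ω₀ x * ω₁ y - ω₀ y * ω₁ x) * f x +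
          (ω₀ x * ω₁ u - ω₀ u * ω₁ x) / (ω₀ x * ω₁ y - ω₀ y * ω₁ x) * f y) :
    ∀ x ∈ Set.Ioo a b, ∀ y ∈ Set.Ioo a b, x < y →
      (∫ u in x..y, ω₀ u * ρ u) / ω₀ (ξ x y) * f (ξ x y) ≤
        ∫ u in x..y, f u * ρ u := by
  intro x hx y hy hxy
  obtain ⟨hξmem, hξratio⟩ := hξ x hx y hy hxy
  set c := ξ x y with hc
  have hcmem : c ∈ Set.Ioo a b := ⟨hx.1.trans hξmem.1, hξmem.2.trans hy.2⟩
  have hω₀c : 0 < ω₀ c := hω₀pos c hcmem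
  -- the "divided difference" slope from c
  set β : ℝ → ℝ := fun w =>
    (ω₀ w * f c - ω₀ c * f w) / (ω₀ w * ω₁ c - ω₀ c * ω₁ w) with hβ
  -- Claim A: monotone across c
  have claimA : ∀ u ∈ Set.Ioo a b, ∀ v ∈ Set.Ioo a b, u < c → c < v → β u ≤ β v := by
    intro u hu v hv huc hcv
    have huv : u < v := huc.trans hcv
    have hΩuc := hcheb u hu c hcmem huc
    have hΩcv := hcheb c hcmem v hv hcv
    have hΩuv := hcheb u hu v hv huv
    have hconv' := hconv u hu c hcmem v hv huc hcv
    have hconv'' : f c * (ω₀ u * ω₁ v - ω₀ v * ω₁ u) ≤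
        (ω₀ c * ω₁ v - ω₀ v * ω₁ c) * f u + (ω₀ u * ω₁ c - ω₀ c * ω₁ u) * f v := by
      rw [div_mul_eq_mul_div, div_mul_eq_mul_div, ← add_div] at hconv'
      calc f c * (ω₀ u * ω₁ v - ω₀ v * ω₁ u)
          ≤ ((ω₀ c * ω₁ v - ω₀ v * ω₁ c) * f u + (ω₀ u * ω₁ c - ω₀ c * ω₁ u) * f v) /
              (ω₀ u * ω₁ v - ω₀ v * ω₁ u) * (ω₀ u * ω₁ v - ω₀ v * ω₁ u) :=
            mul_le_mul_of_nonneg_right hconv' hΩuv.le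
        _ = _ := div_mul_cancel₀ _ hΩuv.ne'
    have hβu : β u = (ω₀ u * f c - ω₀ c * f u) / (ω₀ u * ω₁ c - ω₀ c * ω₁ u) := rfl
    have hβv : β v = (ω₀ c * f v - ω₀ v * f c) / (ω₀ c * ω₁ v - ω₀ v * ω₁ c) := by
      show (ω₀ v * f c - ω₀ c * f v) / (ω₀ v * ω₁ c - ω₀ c * ω₁ v) =
        (ω₀ c * f v - ω₀ v * f c) / (ω₀ c * ω₁ v - ω₀ v * ω₁ c)
      rw [show ω₀ v * f c - ω₀ c * f v = -(ω₀ c * f v - ω₀ v * f c) by ring,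
        show ω₀ v * ω₁ c - ω₀ c * ω₁ v = -(ω₀ c * ω₁ v - ω₀ v * ω₁ c) by ring,
        neg_div_neg_eq]
    rw [hβu, hβv, div_le_div_iff₀ hΩuc hΩcv]
    nlinarith [mul_le_mul_of_nonneg_left hconv'' hω₀c.le]
  -- the supporting slope B
  have hacn : (Set.Ioo a c).Nonempty := Set.nonempty_Ioo.2 (hx.1.trans hξmem.1)
  have hbdd : BddAbove (β '' Set.Ioo a c) := by
    refine ⟨β y, ?_⟩
    rintro _ ⟨u, hu, rfl⟩
    exact claimA u ⟨hu.1, hu.2.trans hcmem.2⟩ y hy hu.2 hξmem.2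
  set B := sSup (β '' Set.Ioo a c) with hB
  have hle : ∀ u ∈ Set.Ioo a b, u < c → β u ≤ B := fun u hu huc =>
    le_csSup hbdd ⟨u, ⟨hu.1, huc⟩, rfl⟩
  have hge : ∀ v ∈ Set.Ioo a b, c < v → B ≤ β v := by
    intro v hv hcv
    refine csSup_le (hacn.image β) ?_
    rintro _ ⟨u, hu, rfl⟩
    exact claimA u ⟨hu.1, hu.2.trans hcmem.2⟩ v hv hu.2 hcv
  -- the supporting generalized line
  set A := (f c - B * ω₁ c) / ω₀ c with hA
  set L : ℝ → ℝ := fun w => A * ω₀ w + B * ω₁ w with hL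
  have hLc : L c = f c := by
    rw [hL, hA]; field_simp; ring
  have hkey : ∀ w ∈ Set.Ioo a b, L w ≤ f w := by
    intro w hw
    rcases lt_trichotomy w c with hwc | hwc | hwc
    · have hΩ := hcheb w hw c hcmem hwc
      have h1 : β w ≤ B := hle w hw hwc
      have h2 : ω₀ w * f c - ω₀ c * f w ≤ B * (ω₀ w * ω₁ c - ω₀ c * ω₁ w) := by
        rw [hβ] at h1; exact (div_le_iff₀ hΩ).mp h1
      show (f c - B * ω₁ c) / ω₀ c * ω₀ w + B * ω₁ w ≤ f w
      rw [div_mul_eq_mul_div, ← sub_nonneg]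
      have : f w - ((f c - B * ω₁ c) * ω₀ w / ω₀ c + B * ω₁ w) =
          (B * (ω₀ w * ω₁ c - ω₀ c * ω₁ w) - (ω₀ w * f c - ω₀ c * f w)) / ω₀ c := by
        field_simp; ring
      rw [this]
      exact div_nonneg (by linarith) hω₀c.le
    · rw [hwc, hLc]
    · have hΩ := hcheb c hcmem w hw hwc
      have h1 : B ≤ β w := hge w hw hwc
      have h2 : ω₀ w * f c - ω₀ c * f w ≤ B * (ω₀ w * ω₁ c - ω₀ c * ω₁ w) := by
        rw [hβ] at h1
        have hneg : ω₀ w * ω₁ c - ω₀ c * ω₁ w < 0 := by linarith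
        have := (le_div_iff_of_neg hneg).mp h1
        linarith
      show (f c - B * ω₁ c) / ω₀ c * ω₀ w + B * ω₁ w ≤ f w
      rw [div_mul_eq_mul_div, ← sub_nonneg]
      have : f w - ((f c - B * ω₁ c) * ω₀ w / ω₀ c + B * ω₁ w) =
          (B * (ω₀ w * ω₁ c - ω₀ c * ω₁ w) - (ω₀ w * f c - ω₀ c * f w)) / ω₀ c := by
        field_simp; ring
      rw [this]
      exact div_nonneg (by linarith) hω₀c.le
  -- integrability facts
  have hsub : Set.uIcc x y ⊆ Set.Ioo a b := by
    rw [Set.uIcc_of_le hxy.le]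
    exact fun z hz => ⟨hx.1.trans_le hz.1, hz.2.trans_lt hy.2⟩
  have hρi := hρint x hx y hy
  have hω₀ρi : IntervalIntegrable (fun u => ω₀ u * ρ u) volume x y :=
    hρi.continuousOn_mul (hc₀.mono hsub)
  have hω₁ρi : IntervalIntegrable (fun u => ω₁ u * ρ u) volume x y :=
    hρi.continuousOn_mul (hc₁.mono hsub)
  have hLρi : IntervalIntegrable (fun u => L u * ρ u) volume x y := by
    refine hρi.continuousOn_mul ?_
    exact ((continuousOn_const.mul (hc₀.mono hsub)).add
      (continuousOn_const.mul (hc₁.mono hsub)))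
  have hfρi := hfρint x hx y hy
  -- positivity of ∫ ω₀ρ
  have hI₀pos : 0 < ∫ u in x..y, ω₀ u * ρ u := by
    refine intervalIntegral.intervalIntegral_pos_of_pos_on hω₀ρi ?_ hxy
    intro u hu
    have hu' : u ∈ Set.Ioo a b := ⟨hx.1.trans hu.1, hu.2.trans hy.2⟩
    exact mul_pos (hω₀pos u hu') (hρpos u hu')
  -- ratio identity
  have hratio : ω₀ c * (∫ u in x..y, ω₁ u * ρ u) = ω₁ c * ∫ u in x..y, ω₀ u * ρ u := by
    have h := hξratio
    rw [div_eq_div_iff hω₀c.ne' hI₀pos.ne'] at h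
    linarith
  -- integral of the line
  have hLint : (∫ u in x..y, L u * ρ u) =
      A * (∫ u in x..y, ω₀ u * ρ u) + B * ∫ u in x..y, ω₁ u * ρ u := by
    have : ∀ u, L u * ρ u = A * (ω₀ u * ρ u) + B * (ω₁ u * ρ u) := by
      intro u; rw [hL]; ring
    simp_rw [this]
    rw [intervalIntegral.integral_add (hω₀ρi.const_mul A) (hω₁ρi.const_mul B),
      intervalIntegral.integral_const_mul, intervalIntegral.integral_const_mul]
  -- comparison of integrals
  have hmono : (∫ u in x..y, L u * ρ u) ≤ ∫ u in x..y, f u * ρ u := by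
    refine intervalIntegral.integral_mono_on hxy.le hLρi hfρi ?_
    intro u hu
    have hu' : u ∈ Set.Ioo a b := ⟨hx.1.trans_le hu.1, hu.2.trans_lt hy.2⟩
    exact mul_le_mul_of_nonneg_right (hkey u hu') (hρpos u hu').le
  -- conclude
  have hfinal : (∫ u in x..y, ω₀ u * ρ u) / ω₀ c * f c = ∫ u in x..y, L u * ρ u := by
    rw [hLint, hA]
    field_simp
    linear_combination (-B) * hratio
  rw [hfinal]
  exact hmono
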